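/- Principal Type Proposition: If an untyped linear λ-term t is typable in the linear type assignment system (i.e., Γ ⊢ t:A is derivable for some context Γ and type A), then t has a principal typing: there is a typing Γ0 ⊢ t : PT(t) that is derivable and such that whenever Γ' ⊢ t : A' is derivable, A' is an instance of PT(t) and Γ' is the corresponding instance of Γ0. -/

import Mathlib

/-! Linear λ-calculus preamble -/

/-- Types of the linear λ-calculus: type variables, tensor product, linear implication. -/
inductive Ty : Type
  | tvar : ℕ → Ty
  | tensor : Ty → Ty → Ty
  | arrow : Ty → Ty → Ty
deriving DecidableEq

/-- Terms of the linear λ-calculus. -/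
inductive Tm : Type
  | var : ℕ → Tm
  | app : Tm → Tm → Tm
  | lam : ℕ → Tm → Tm
  | pair : Tm → Tm → Tm
  | letp : ℕ → ℕ → Tm → Tm → Tm
deriving DecidableEq

/-- Free variables of a term. -/
def Tm.fv : Tm → Finset ℕ
  | .var x => {x}
  | .app t s => t.fv ∪ s.fv
  | .lam x t => t.fv \ {x}
  | .pair t s => t.fv ∪ s.fv
  | .letp x y s t => s.fv ∪ (t.fv \ {x, y})

/-- Substitution of a term for a variable. -/
def Tm.subst : Tm → ℕ → Tm → Tm
  | .var y, x, s => if y = x then s else .var y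
  | .app t u, x, s => .app (t.subst x s) (u.subst x s)
  | .lam y t, x, s => if y = x then .lam y t else .lam y (t.subst x s)
  | .pair t u, x, s => .pair (t.subst x s) (u.subst x s)
  | .letp y z u t, x, s =>
      .letp y z (u.subst x s) (if x = y ∨ x = z then t else t.subst x s)

/-- Typing contexts: finite lists of typed variables. -/
abbrev Ctxt := List (ℕ × Ty)

/-- The linear type assignment system. -/
inductive Typed : Ctxt → Tm → Ty → Prop
  | var (x : ℕ) (A : Ty) : Typed [(x, A)] (.var x) A
  | exch (Γ Δ : Ctxt) (x y : ℕ) (A B : Ty) (t : Tm) (C : Ty) :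
      Typed (Γ ++ (x, A) :: (y, B) :: Δ) t C →
      Typed (Γ ++ (y, B) :: (x, A) :: Δ) t C
  | lam (x : ℕ) (A : Ty) (Γ : Ctxt) (t : Tm) (B : Ty) :
      Typed ((x, A) :: Γ) t B → Typed Γ (.lam x t) (.arrow A B)
  | app (Γ Δ : Ctxt) (t s : Tm) (A B : Ty) :
      Typed Γ t (.arrow A B) → Typed Δ s A → Typed (Γ ++ Δ) (.app t s) B
  | pair (Γ Δ : Ctxt) (s t : Tm) (A B : Ty) :
      Typed Γ s A → Typed Δ t B → Typed (Γ ++ Δ) (.pair s t) (.tensor A B)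
  | letp (Γ Δ : Ctxt) (s t : Tm) (x y : ℕ) (A B C : Ty) :
      Typed Γ s (.tensor A B) → Typed ((x, A) :: (y, B) :: Δ) t C →
      Typed (Γ ++ Δ) (.letp x y s t) C

/-- One-hole contexts. -/
inductive Cx : Type
  | hole : Cx
  | appL : Cx → Tm → Cx
  | appR : Tm → Cx → Cx
  | pairL : Cx → Tm → Cx
  | pairR : Tm → Cx → Cx
  | lam : ℕ → Cx → Cx
  | letL : ℕ → ℕ → Cx → Tm → Cx
  | letR : ℕ → ℕ → Tm → Cx → Cx

/-- Plugging a term into a one-hole context. -/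
def Cx.plug : Cx → Tm → Tm
  | .hole, u => u
  | .appL C t, u => .app (C.plug u) t
  | .appR t C, u => .app t (C.plug u)
  | .pairL C t, u => .pair (C.plug u) t
  | .pairR t C, u => .pair t (C.plug u)
  | .lam x C, u => .lam x (C.plug u)
  | .letL x y C t, u => .letp x y (C.plug u) t
  | .letR x y t C, u => .letp x y t (C.plug u)

/-- Variables captured by a context. -/
def Cx.cv : Cx → Finset ℕ
  | .hole => ∅
  | .appL C _ => C.cv
  | .appR _ C => C.cv
  | .pairL C _ => C.cv
  | .pairR _ C => C.cv
  | .lam x C => insert x C.cv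
  | .letL _ _ C _ => C.cv
  | .letR x y _ C => insert x (insert y C.cv)

/-- Free variables of a context. -/
def Cx.fv : Cx → Finset ℕ
  | .hole => ∅
  | .appL C t => C.fv ∪ t.fv
  | .appR t C => t.fv ∪ C.fv
  | .pairL C t => C.fv ∪ t.fv
  | .pairR t C => t.fv ∪ C.fv
  | .lam x C => C.fv \ {x}
  | .letL x y C t => C.fv ∪ (t.fv \ {x, y})
  | .letR x y t C => t.fv ∪ (C.fv \ {x, y})

/-- The base βη-reduction rules. -/
inductive StepBase : Tm → Tm → Prop
  | beta1 (x : ℕ) (t s : Tm) : StepBase (.app (.lam x t) s) (t.subst x s)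
  | beta2 (x y : ℕ) (u v w : Tm) :
      StepBase (.letp x y (.pair u v) w) ((w.subst x u).subst y v)
  | eta1 (x : ℕ) (t : Tm) : x ∉ t.fv → StepBase (.lam x (.app t (.var x))) t
  | eta2 (x y : ℕ) (t : Tm) : x ≠ y → x ∉ t.fv → y ∉ t.fv →
      StepBase (.letp x y t (.pair (.var x) (.var y))) t

/-- Closure of a relation under arbitrary one-hole contexts. -/
def Congr (R : Tm → Tm → Prop) (t u : Tm) : Prop :=
  ∃ (C : Cx) (a b : Tm), R a b ∧ t = C.plug a ∧ u = C.plug b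

/-- One-step βη-reduction (congruent closure of the base rules): →βη. -/
def Step : Tm → Tm → Prop := Congr StepBase

/-- The base commutative conversion rule ↔c. -/
def CommBase (t u : Tm) : Prop :=
  ∃ (C : Cx) (x y : ℕ) (s w : Tm),
    x ∉ C.fv ∧ y ∉ C.fv ∧ (∀ z ∈ C.cv, z ∉ s.fv) ∧
    t = C.plug (.letp x y s w) ∧ u = .letp x y s (C.plug w)

/-- The congruent equivalence relation =c generated by ↔c. -/
def Ceq : Tm → Tm → Prop := Relation.EqvGen (Congr CommBase)

/-- One-step reduction modulo commutative conversion: →βηc. -/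
def StepC (t u : Tm) : Prop := ∃ t' u', Ceq t t' ∧ Step t' u' ∧ Ceq u' u

/-- The equality =βηc : the least congruent equivalence relation containing ↔c and →βηc. -/
def BEqc : Tm → Tm → Prop :=
  Relation.EqvGen (Congr (fun a b => CommBase a b ∨ StepC a b))

/-- Type substitutions and their action on types. -/
def Ty.subst : Ty → (ℕ → Ty) → Ty
  | .tvar a, θ => θ a
  | .tensor A B, θ => .tensor (A.subst θ) (B.subst θ)
  | .arrow A B, θ => .arrow (A.subst θ) (B.subst θ)

/-- Action of a type substitution on a typing context. -/
def CtxtSubst (Γ : Ctxt) (θ : ℕ → Ty) : Ctxt := Γ.map (fun p => (p.1, p.2.subst θ))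

/-- `A` is the principal type of the closed term `t`. -/
def IsPT (t : Tm) (A : Ty) : Prop :=
  Typed [] t A ∧ ∀ A', Typed [] t A' → ∃ θ, A' = A.subst θ

/-- Iterated linear implication `A1->...->An->B`. -/
def arrows (As : List Ty) (B : Ty) : Ty := As.foldr .arrow B

/-- Iterated application `t s1 ⋯ sn`. -/
def apps (t : Tm) (ss : List Tm) : Tm := ss.foldl .app t

/-- `t` is poly-typable by `A1->...->An->B` with respect to closed terms `s1,...,sn`
of types `A1,...,An`. -/
def PolyTypableN (t : Tm) (As : List Ty) (B : Ty) (ss : List Tm) : Prop :=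
  (∃ (As' : List Ty) (B' : Ty), As'.length = As.length ∧ Typed [] t (arrows As' B')) ∧
  List.Forall₂ (fun s A => Typed [] s A) ss As ∧
  ∃ (θ : ℕ → Ty) (PTt : Ty) (As'' : List Ty),
    IsPT t PTt ∧ PTt.subst θ = arrows As'' B ∧
    List.Forall₂ (fun s A'' => ∃ P, IsPT s P ∧ P.subst θ = A'') ss As''


/-- Number of (non-binding) occurrences of the variable `x` in a term. -/
def Tm.uses : Tm → ℕ → ℕ
  | .var y, x => if y = x then 1 else 0
  | .app t s, x => t.uses x + s.uses x
  | .lam _ t, x => t.uses x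
  | .pair t s, x => t.uses x + s.uses x
  | .letp _ _ s t, x => s.uses x + t.uses x

/-- Number of binding occurrences of the variable `x` in a term. -/
def Tm.binds : Tm → ℕ → ℕ
  | .var _, _ => 0
  | .app t s, x => t.binds x + s.binds x
  | .lam y t, x => (if y = x then 1 else 0) + t.binds x
  | .pair t s, x => t.binds x + s.binds x
  | .letp y z s t, x =>
      (if y = x then 1 else 0) + (if z = x then 1 else 0) + s.binds x + t.binds x

/-- An untyped linear λ-term: each free or bound variable occurs exactly once
(each variable is used at most once, is bound at most once, and a bound variable is
used exactly once, with its use captured by its binder). -/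
def Tm.LinearTm (t : Tm) : Prop :=
  (∀ x, t.uses x ≤ 1) ∧ (∀ x, t.binds x ≤ 1) ∧
  (∀ x, t.binds x = 1 → t.uses x = 1 ∧ x ∉ t.fv)

namespace PTP

def tvars : Ty → Finset ℕ
  | .tvar a => {a}
  | .tensor A B => tvars A ∪ tvars B
  | .arrow A B => tvars A ∪ tvars B

def tsize : Ty → ℕ
  | .tvar _ => 1
  | .tensor A B => tsize A + tsize B + 1
  | .arrow A B => tsize A + tsize B + 1

theorem subst_comp (A : Ty) (σ ρ : ℕ → Ty) :
    (A.subst σ).subst ρ = A.subst (fun v => (σ v).subst ρ) := by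
  induction A with
  | tvar a => rfl
  | tensor A B ihA ihB => simp [Ty.subst, ihA, ihB]
  | arrow A B ihA ihB => simp [Ty.subst, ihA, ihB]

theorem subst_congr {A : Ty} {σ τ : ℕ → Ty} (h : ∀ v ∈ tvars A, σ v = τ v) :
    A.subst σ = A.subst τ := by
  induction A with
  | tvar a => exact h a (by simp [tvars])
  | tensor A B ihA ihB =>
      simp only [Ty.subst]
      rw [ihA fun v hv => h v (by simp [tvars, hv]),
          ihB fun v hv => h v (by simp [tvars, hv])]
  | arrow A B ihA ihB =>
      simp only [Ty.subst]
      rw [ihA fun v hv => h v (by simp [tvars, hv]),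
          ihB fun v hv => h v (by simp [tvars, hv])]

theorem subst_id (A : Ty) : A.subst Ty.tvar = A := by
  induction A with
  | tvar a => rfl
  | tensor A B ihA ihB => simp [Ty.subst, ihA, ihB]
  | arrow A B ihA ihB => simp [Ty.subst, ihA, ihB]

/-- single substitution -/
def sub1 (a : ℕ) (B : Ty) : ℕ → Ty := fun v => if v = a then B else .tvar v

theorem sub1_cancel {σ : ℕ → Ty} {a : ℕ} {B : Ty} (h : σ a = B.subst σ) (C : Ty) :
    (C.subst (sub1 a B)).subst σ = C.subst σ := by
  rw [subst_comp]
  apply subst_congr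
  intro v _
  by_cases hv : v = a <;> simp [sub1, hv, Ty.subst, h.symm]

theorem vars_sub1 {a : ℕ} {B : Ty} (hB : a ∉ tvars B) (C : Ty) :
    tvars (C.subst (sub1 a B)) ⊆ (tvars C ∪ tvars B) \ ({a} : Finset ℕ) := by
  induction C with
  | tvar b =>
      by_cases hb : b = a
      · subst hb
        simp only [Ty.subst, sub1, if_pos rfl]
        intro v hv
        simp only [Finset.mem_sdiff, Finset.mem_union, Finset.mem_singleton]
        exact ⟨Or.inr hv, fun h => hB (h ▸ hv)⟩
      · simp only [Ty.subst, sub1, if_neg hb]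
        intro v hv
        simp only [tvars, Finset.mem_singleton] at hv
        subst hv
        simp [tvars, hb]
  | tensor A B ihA ihB =>
      simp only [Ty.subst, tvars]
      intro v hv
      rcases Finset.mem_union.1 hv with h | h
      · have := ihA h
        simp only [Finset.mem_sdiff, Finset.mem_union] at this ⊢
        tauto
      · have := ihB h
        simp only [Finset.mem_sdiff, Finset.mem_union] at this ⊢
        tauto
  | arrow A B ihA ihB =>
      simp only [Ty.subst, tvars]
      intro v hv
      rcases Finset.mem_union.1 hv with h | h
      · have := ihA h
        simp only [Finset.mem_sdiff, Finset.mem_union] at this ⊢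
        tauto
      · have := ihB h
        simp only [Finset.mem_sdiff, Finset.mem_union] at this ⊢
        tauto

theorem sub1_fix {a : ℕ} {B : Ty} (hB : a ∉ tvars B) : B.subst (sub1 a B) = B := by
  have : B.subst (sub1 a B) = B.subst Ty.tvar := by
    apply subst_congr
    intro v hv
    have : v ≠ a := fun h => hB (h ▸ hv)
    simp [sub1, this]
  rw [this, subst_id]

theorem occurs_size {a : ℕ} {B : Ty} (h : a ∈ tvars B) (σ : ℕ → Ty) :
    tsize (σ a) ≤ tsize (B.subst σ) ∧
      (B ≠ .tvar a → tsize (σ a) < tsize (B.subst σ)) := by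
  induction B with
  | tvar b =>
      simp only [tvars, Finset.mem_singleton] at h
      subst h
      exact ⟨le_refl _, fun hne => absurd rfl hne⟩
  | tensor A B ihA ihB =>
      simp only [tvars, Finset.mem_union] at h
      have key : tsize (σ a) < tsize ((A.tensor B).subst σ) := by
        rcases h with h | h
        · have := (ihA h).1; simp only [Ty.subst, tsize]; omega
        · have := (ihB h).1; simp only [Ty.subst, tsize]; omega
      exact ⟨le_of_lt key, fun _ => key⟩
  | arrow A B ihA ihB =>
      simp only [tvars, Finset.mem_union] at h
      have key : tsize (σ a) < tsize ((A.arrow B).subst σ) := by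
        rcases h with h | h
        · have := (ihA h).1; simp only [Ty.subst, tsize]; omega
        · have := (ihB h).1; simp only [Ty.subst, tsize]; omega
      exact ⟨le_of_lt key, fun _ => key⟩


theorem tvars_tvar (a : ℕ) : tvars (.tvar a) = {a} := rfl
theorem tvars_tensor (A B : Ty) : tvars (.tensor A B) = tvars A ∪ tvars B := rfl
theorem tvars_arrow (A B : Ty) : tvars (.arrow A B) = tvars A ∪ tvars B := rfl
theorem tsize_tensor (A B : Ty) : tsize (.tensor A B) = tsize A + tsize B + 1 := rfl
theorem tsize_arrow (A B : Ty) : tsize (.arrow A B) = tsize A + tsize B + 1 := rfl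

theorem tsize_pos (A : Ty) : 1 ≤ tsize A := by
  cases A <;> simp [tsize]

/-! ### Unification -/

def Unifies (σ : ℕ → Ty) (E : List (Ty × Ty)) : Prop :=
  ∀ p ∈ E, Ty.subst p.1 σ = Ty.subst p.2 σ

def varsE : List (Ty × Ty) → Finset ℕ
  | [] => ∅
  | p :: E => tvars p.1 ∪ tvars p.2 ∪ varsE E

def sizeE : List (Ty × Ty) → ℕ
  | [] => 0
  | p :: E => tsize p.1 + tsize p.2 + sizeE E

def IsMGU (μ : ℕ → Ty) (E : List (Ty × Ty)) : Prop :=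
  Unifies μ E ∧ ∀ σ, Unifies σ E → ∃ ρ, ∀ v, σ v = (μ v).subst ρ

def mapSub (a : ℕ) (B : Ty) (E : List (Ty × Ty)) : List (Ty × Ty) :=
  E.map fun p => (p.1.subst (sub1 a B), p.2.subst (sub1 a B))

theorem unifies_mapSub {σ : ℕ → Ty} {a : ℕ} {B : Ty} {E : List (Ty × Ty)}
    (h : σ a = B.subst σ) (hU : Unifies σ E) : Unifies σ (mapSub a B E) := by
  intro p hp
  simp only [mapSub, List.mem_map] at hp
  obtain ⟨q, hq, rfl⟩ := hp
  simpa [sub1_cancel h] using hU q hq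

theorem varsE_mapSub {a : ℕ} {B : Ty} (hB : a ∉ tvars B) (E : List (Ty × Ty)) :
    varsE (mapSub a B E) ⊆ (varsE E ∪ tvars B) \ ({a} : Finset ℕ) := by
  induction E with
  | nil => simp [mapSub, varsE]
  | cons q E' ih =>
      intro v hv
      simp only [mapSub, List.map_cons, varsE, Finset.mem_union] at hv
      have step : ∀ C : Ty, v ∈ tvars (C.subst (sub1 a B)) →
          v ∈ (tvars C ∪ tvars B) \ ({a} : Finset ℕ) := fun C h => vars_sub1 hB C h
      simp only [Finset.mem_sdiff, Finset.mem_union, Finset.mem_singleton] at step ⊢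
      rcases hv with (hv | hv) | hv
      · have := step q.1 hv
        simp only [varsE, Finset.mem_union]; tauto
      · have := step q.2 hv
        simp only [varsE, Finset.mem_union]; tauto
      · have := ih hv
        simp only [Finset.mem_sdiff, Finset.mem_union, varsE, Finset.mem_singleton] at this ⊢
        tauto

/-- The variable elimination step. -/
theorem unify_elim (a : ℕ) (B : Ty) (E' : List (Ty × Ty)) (hB : a ∉ tvars B)
    (hrec : (∃ σ, Unifies σ (mapSub a B E')) → ∃ μ', IsMGU μ' (mapSub a B E'))
    (hex : ∃ σ, Unifies σ ((Ty.tvar a, B) :: E')) :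
    ∃ μ, IsMGU μ ((Ty.tvar a, B) :: E') := by
  obtain ⟨σ0, hσ0⟩ := hex
  have h0a : σ0 a = B.subst σ0 := hσ0 (.tvar a, B) (by simp)
  have hσ0' : Unifies σ0 E' := fun p hp => hσ0 p (by simp [hp])
  obtain ⟨μ', hμ'U, hμ'M⟩ := hrec ⟨σ0, unifies_mapSub h0a hσ0'⟩
  refine ⟨fun v => (sub1 a B v).subst μ', ?_, ?_⟩
  · intro p hp
    rcases List.mem_cons.1 hp with rfl | hp
    · show (Ty.tvar a).subst _ = _
      have h1 : (Ty.tvar a).subst (fun v => (sub1 a B v).subst μ') = B.subst μ' := by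
        simp [Ty.subst, sub1]
      rw [h1]
      calc B.subst μ' = (B.subst (sub1 a B)).subst μ' := by rw [sub1_fix hB]
        _ = B.subst (fun v => (sub1 a B v).subst μ') := subst_comp ..
    · have hmem : (p.1.subst (sub1 a B), p.2.subst (sub1 a B)) ∈ mapSub a B E' := by
        simp only [mapSub, List.mem_map]; exact ⟨p, hp, rfl⟩
      have h2 := hμ'U _ hmem
      simp only at h2
      calc p.1.subst (fun v => (sub1 a B v).subst μ')
          = (p.1.subst (sub1 a B)).subst μ' := (subst_comp ..).symm
        _ = (p.2.subst (sub1 a B)).subst μ' := h2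
        _ = p.2.subst (fun v => (sub1 a B v).subst μ') := subst_comp ..
  · intro σ hσ
    have ha : σ a = B.subst σ := hσ (.tvar a, B) (by simp)
    have hσE : Unifies σ E' := fun p hp => hσ p (by simp [hp])
    obtain ⟨ρ, hρ⟩ := hμ'M σ (unifies_mapSub ha hσE)
    refine ⟨ρ, fun v => ?_⟩
    have h3 : ((sub1 a B v).subst μ').subst ρ = (sub1 a B v).subst σ := by
      rw [subst_comp]
      exact subst_congr fun w _ => (hρ w).symm
    rw [h3]
    by_cases hv : v = a
    · subst hv; simp [sub1, Ty.subst, ha]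
    · simp [sub1, hv, Ty.subst]

theorem unify_exists_aux : ∀ k m (E : List (Ty × Ty)), (varsE E).card ≤ k → sizeE E ≤ m →
    (∃ σ, Unifies σ E) → ∃ μ, IsMGU μ E := by
  intro k
  induction k using Nat.strong_induction_on with | _ k IHk =>
  intro m
  induction m using Nat.strong_induction_on with | _ m IHm =>
  intro E hk hm hex
  match E with
  | [] => exact ⟨Ty.tvar, fun p hp => absurd hp (by simp), fun σ _ => ⟨σ, fun v => rfl⟩⟩
  | (A, B) :: E' =>
    have hE'sub : varsE E' ⊆ varsE ((A, B) :: E') := by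
      intro v hv; simp only [varsE, Finset.mem_union]; tauto
    -- the elimination recursion, packaged
    have elim : ∀ (a : ℕ) (C : Ty), a ∉ tvars C →
        insert a (tvars C) ⊆ varsE ((A, B) :: E') →
        (∃ σ, Unifies σ ((Ty.tvar a, C) :: E')) →
        ∃ μ, IsMGU μ ((Ty.tvar a, C) :: E') := by
      intro a C hocc hsub hex'
      apply unify_elim a C E' hocc _ hex'
      intro hexm
      have ha : a ∈ varsE ((A, B) :: E') := hsub (Finset.mem_insert_self a _)
      have hvars : varsE (mapSub a C E') ⊆ varsE ((A, B) :: E') \ {a} := by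
        intro v hv
        have h1 := varsE_mapSub hocc E' hv
        simp only [Finset.mem_sdiff, Finset.mem_union, Finset.mem_singleton] at h1 ⊢
        refine ⟨?_, h1.2⟩
        rcases h1.1 with h | h
        · exact hE'sub h
        · exact hsub (Finset.mem_insert_of_mem h)
      have hcard : (varsE (mapSub a C E')).card ≤ k - 1 := by
        calc (varsE (mapSub a C E')).card ≤ (varsE ((A, B) :: E') \ {a}).card :=
              Finset.card_le_card hvars
          _ = (varsE ((A, B) :: E')).card - 1 := by
              rw [Finset.card_sdiff_of_subset (by simpa using ha)]; simp
          _ ≤ k - 1 := by omega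
      have hk1 : 1 ≤ k := le_trans (Finset.card_pos.2 ⟨a, ha⟩) hk
      exact IHk (k - 1) (by omega) (sizeE (mapSub a C E')) _ hcard (le_refl _) hexm
    match A, B with
    | .tvar a, B =>
      by_cases hba : B = .tvar a
      · -- trivial equation, drop it
        subst hba
        have hiff : ∀ σ, Unifies σ ((Ty.tvar a, Ty.tvar a) :: E') ↔ Unifies σ E' := by
          intro σ
          constructor
          · exact fun h p hp => h p (by simp [hp])
          · intro h p hp
            rcases List.mem_cons.1 hp with rfl | hp
            · rfl
            · exact h p hp
        have hsize : sizeE E' < m := by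
          have := tsize_pos (Ty.tvar a)
          simp only [sizeE] at hm; omega
        obtain ⟨μ, hμU, hμM⟩ := IHm (sizeE E') hsize E'
          (le_trans (Finset.card_le_card hE'sub) hk) (le_refl _)
          (hex.imp fun σ h => (hiff σ).1 h)
        exact ⟨μ, (hiff μ).2 hμU, fun σ h => hμM σ ((hiff σ).1 h)⟩
      · by_cases hocc : a ∈ tvars B
        · -- occur check failure: contradiction with hex
          exfalso
          obtain ⟨σ, hσ⟩ := hex
          have h1 : σ a = B.subst σ := hσ (.tvar a, B) (by simp)
          have h2 := (occurs_size hocc σ).2 hba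
          rw [h1] at h2
          exact lt_irrefl _ h2
        · exact elim a B hocc (by
            intro v hv
            simp only [Finset.mem_insert] at hv
            simp only [varsE, Finset.mem_union, tvars_tvar]
            rcases hv with rfl | hv
            · simp
            · tauto) hex
    | .tensor A1 A2, .tvar b =>
      by_cases hocc : b ∈ tvars (Ty.tensor A1 A2)
      · exfalso
        obtain ⟨σ, hσ⟩ := hex
        have h1 : (Ty.tensor A1 A2).subst σ = σ b := hσ (.tensor A1 A2, .tvar b) (by simp)
        have h2 := (occurs_size hocc σ).2 (by simp)
        rw [h1] at h2
        exact lt_irrefl _ h2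
      · have hswap : ∀ σ, Unifies σ ((Ty.tvar b, Ty.tensor A1 A2) :: E') ↔
            Unifies σ ((Ty.tensor A1 A2, Ty.tvar b) :: E') := by
          intro σ
          constructor <;> intro h p hp <;> rcases List.mem_cons.1 hp with rfl | hp
          · exact (h (.tvar b, .tensor A1 A2) (by simp)).symm
          · exact h p (by simp [hp])
          · exact (h (.tensor A1 A2, .tvar b) (by simp)).symm
          · exact h p (by simp [hp])
        obtain ⟨μ, hμU, hμM⟩ := elim b (Ty.tensor A1 A2) hocc (by
            intro v hv
            simp only [Finset.mem_insert] at hv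
            simp only [varsE, Finset.mem_union, tvars_tvar]
            rcases hv with rfl | hv
            · simp
            · tauto) (hex.imp fun σ h => (hswap σ).2 h)
        exact ⟨μ, (hswap μ).1 hμU, fun σ h => hμM σ ((hswap σ).2 h)⟩
    | .arrow A1 A2, .tvar b =>
      by_cases hocc : b ∈ tvars (Ty.arrow A1 A2)
      · exfalso
        obtain ⟨σ, hσ⟩ := hex
        have h1 : (Ty.arrow A1 A2).subst σ = σ b := hσ (.arrow A1 A2, .tvar b) (by simp)
        have h2 := (occurs_size hocc σ).2 (by simp)
        rw [h1] at h2
        exact lt_irrefl _ h2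
      · have hswap : ∀ σ, Unifies σ ((Ty.tvar b, Ty.arrow A1 A2) :: E') ↔
            Unifies σ ((Ty.arrow A1 A2, Ty.tvar b) :: E') := by
          intro σ
          constructor <;> intro h p hp <;> rcases List.mem_cons.1 hp with rfl | hp
          · exact (h (.tvar b, .arrow A1 A2) (by simp)).symm
          · exact h p (by simp [hp])
          · exact (h (.arrow A1 A2, .tvar b) (by simp)).symm
          · exact h p (by simp [hp])
        obtain ⟨μ, hμU, hμM⟩ := elim b (Ty.arrow A1 A2) hocc (by
            intro v hv
            simp only [Finset.mem_insert] at hv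
            simp only [varsE, Finset.mem_union, tvars_tvar]
            rcases hv with rfl | hv
            · simp
            · tauto) (hex.imp fun σ h => (hswap σ).2 h)
        exact ⟨μ, (hswap μ).1 hμU, fun σ h => hμM σ ((hswap σ).2 h)⟩
    | .tensor A1 A2, .tensor B1 B2 =>
      have hiff : ∀ σ, Unifies σ ((Ty.tensor A1 A2, Ty.tensor B1 B2) :: E') ↔
          Unifies σ ((A1, B1) :: (A2, B2) :: E') := by
        intro σ
        constructor
        · intro h p hp
          have hh : (Ty.tensor A1 A2).subst σ = (Ty.tensor B1 B2).subst σ :=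
            h (.tensor A1 A2, .tensor B1 B2) (by simp)
          simp only [Ty.subst, Ty.tensor.injEq] at hh
          rcases List.mem_cons.1 hp with rfl | hp
          · exact hh.1
          rcases List.mem_cons.1 hp with rfl | hp
          · exact hh.2
          · exact h p (by simp [hp])
        · intro h p hp
          rcases List.mem_cons.1 hp with rfl | hp
          · have h1 : A1.subst σ = B1.subst σ := h (A1, B1) (by simp)
            have h2 : A2.subst σ = B2.subst σ := h (A2, B2) (by simp)
            simp [Ty.subst, h1, h2]
          · exact h p (by simp [hp])
      have hvsub : varsE ((A1, B1) :: (A2, B2) :: E') ⊆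
          varsE ((Ty.tensor A1 A2, Ty.tensor B1 B2) :: E') := by
        intro v hv
        simp only [varsE, Finset.mem_union, tvars_tensor] at hv ⊢
        tauto
      have hsize : sizeE ((A1, B1) :: (A2, B2) :: E') < m := by
        simp only [sizeE, tsize_tensor] at hm ⊢; omega
      obtain ⟨μ, hμU, hμM⟩ := IHm _ hsize ((A1, B1) :: (A2, B2) :: E')
        (le_trans (Finset.card_le_card hvsub) hk) (le_refl _)
        (hex.imp fun σ h => (hiff σ).1 h)
      exact ⟨μ, (hiff μ).2 hμU, fun σ h => hμM σ ((hiff σ).1 h)⟩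
    | .arrow A1 A2, .arrow B1 B2 =>
      have hiff : ∀ σ, Unifies σ ((Ty.arrow A1 A2, Ty.arrow B1 B2) :: E') ↔
          Unifies σ ((A1, B1) :: (A2, B2) :: E') := by
        intro σ
        constructor
        · intro h p hp
          have hh : (Ty.arrow A1 A2).subst σ = (Ty.arrow B1 B2).subst σ :=
            h (.arrow A1 A2, .arrow B1 B2) (by simp)
          simp only [Ty.subst, Ty.arrow.injEq] at hh
          rcases List.mem_cons.1 hp with rfl | hp
          · exact hh.1
          rcases List.mem_cons.1 hp with rfl | hp
          · exact hh.2
          · exact h p (by simp [hp])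
        · intro h p hp
          rcases List.mem_cons.1 hp with rfl | hp
          · have h1 : A1.subst σ = B1.subst σ := h (A1, B1) (by simp)
            have h2 : A2.subst σ = B2.subst σ := h (A2, B2) (by simp)
            simp [Ty.subst, h1, h2]
          · exact h p (by simp [hp])
      have hvsub : varsE ((A1, B1) :: (A2, B2) :: E') ⊆
          varsE ((Ty.arrow A1 A2, Ty.arrow B1 B2) :: E') := by
        intro v hv
        simp only [varsE, Finset.mem_union, tvars_arrow] at hv ⊢
        tauto
      have hsize : sizeE ((A1, B1) :: (A2, B2) :: E') < m := by
        simp only [sizeE, tsize_arrow] at hm ⊢; omega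
      obtain ⟨μ, hμU, hμM⟩ := IHm _ hsize ((A1, B1) :: (A2, B2) :: E')
        (le_trans (Finset.card_le_card hvsub) hk) (le_refl _)
        (hex.imp fun σ h => (hiff σ).1 h)
      exact ⟨μ, (hiff μ).2 hμU, fun σ h => hμM σ ((hiff σ).1 h)⟩
    | .tensor A1 A2, .arrow B1 B2 =>
      exfalso
      obtain ⟨σ, hσ⟩ := hex
      have := hσ (.tensor A1 A2, .arrow B1 B2) (by simp)
      simp [Ty.subst] at this
    | .arrow A1 A2, .tensor B1 B2 =>
      exfalso
      obtain ⟨σ, hσ⟩ := hex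
      have := hσ (.arrow A1 A2, .tensor B1 B2) (by simp)
      simp [Ty.subst] at this

theorem mgu_exists (A B : Ty) (h : ∃ σ, A.subst σ = B.subst σ) :
    ∃ μ, A.subst μ = B.subst μ ∧
      ∀ σ, A.subst σ = B.subst σ → ∃ ρ, ∀ v, σ v = (μ v).subst ρ := by
  obtain ⟨σ, hσ⟩ := h
  have hex : ∃ σ, Unifies σ [(A, B)] := ⟨σ, by
    intro p hp; simp only [List.mem_singleton] at hp; subst hp; exact hσ⟩
  obtain ⟨μ, hμU, hμM⟩ := unify_exists_aux (varsE [(A, B)]).card (sizeE [(A, B)])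
    [(A, B)] (le_refl _) (le_refl _) hex
  refine ⟨μ, hμU (A, B) (by simp), fun σ' hσ' => hμM σ' ?_⟩
  intro p hp; simp only [List.mem_singleton] at hp; subst hp; exact hσ'

/-! ### Permutation and substitution closure of typing -/

theorem typed_perm_aux {Γ₁ Γ₂ : Ctxt} (h : Γ₁.Perm Γ₂) :
    ∀ (Θ : Ctxt) (t : Tm) (A : Ty), Typed (Θ ++ Γ₁) t A → Typed (Θ ++ Γ₂) t A := by
  induction h with
  | nil => exact fun Θ t A h => h
  | cons p hp ih =>
      intro Θ t A h
      have h1 := ih (Θ ++ [p]) t A (by simpa [List.append_assoc] using h)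
      simpa [List.append_assoc] using h1
  | swap p q l =>
      intro Θ t A h
      exact Typed.exch Θ l q.1 p.1 q.2 p.2 t A h
  | trans h1 h2 ih1 ih2 =>
      intro Θ t A h
      exact ih2 Θ t A (ih1 Θ t A h)

theorem typed_perm {Γ Γ' : Ctxt} {t : Tm} {A : Ty} (h : Typed Γ t A) (hp : Γ.Perm Γ') :
    Typed Γ' t A := typed_perm_aux hp [] t A h

theorem exch_perm (Γ Δ : Ctxt) (p q : ℕ × Ty) :
    (Γ ++ p :: q :: Δ).Perm (Γ ++ q :: p :: Δ) :=
  List.Perm.append_left Γ (List.Perm.swap q p Δ)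

theorem CtxtSubst_append (Γ Δ : Ctxt) (θ : ℕ → Ty) :
    CtxtSubst (Γ ++ Δ) θ = CtxtSubst Γ θ ++ CtxtSubst Δ θ := List.map_append

theorem CtxtSubst_cons (p : ℕ × Ty) (Γ : Ctxt) (θ : ℕ → Ty) :
    CtxtSubst (p :: Γ) θ = (p.1, p.2.subst θ) :: CtxtSubst Γ θ := rfl

theorem CtxtSubst_comp (Γ : Ctxt) (θ ρ : ℕ → Ty) :
    CtxtSubst (CtxtSubst Γ θ) ρ = CtxtSubst Γ (fun v => (θ v).subst ρ) := by
  simp only [CtxtSubst, List.map_map]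
  apply List.map_congr_left
  intro p _
  simp [subst_comp]

theorem CtxtSubst_keys (Γ : Ctxt) (θ : ℕ → Ty) :
    (CtxtSubst Γ θ).map Prod.fst = Γ.map Prod.fst := by
  simp [CtxtSubst, List.map_map]

theorem CtxtSubst_perm {Γ Δ : Ctxt} (h : Γ.Perm Δ) (θ : ℕ → Ty) :
    (CtxtSubst Γ θ).Perm (CtxtSubst Δ θ) := h.map _

theorem typed_subst {Γ : Ctxt} {t : Tm} {A : Ty} (h : Typed Γ t A) (θ : ℕ → Ty) :
    Typed (CtxtSubst Γ θ) t (A.subst θ) := by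
  induction h with
  | var x A => exact Typed.var x (A.subst θ)
  | exch Γ Δ x y A B t C h ih =>
      have h1 : Typed (CtxtSubst Γ θ ++ (x, A.subst θ) :: (y, B.subst θ) :: CtxtSubst Δ θ)
          t (C.subst θ) := by
        simpa [CtxtSubst_append, CtxtSubst_cons] using ih
      have := Typed.exch _ _ x y _ _ t _ h1
      simpa [CtxtSubst_append, CtxtSubst_cons] using this
  | lam x A Γ t B h ih => exact Typed.lam x _ _ t _ ih
  | app Γ Δ t s A B h1 h2 ih1 ih2 =>
      rw [CtxtSubst_append]
      exact Typed.app _ _ t s _ _ ih1 ih2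
  | pair Γ Δ s t A B h1 h2 ih1 ih2 =>
      rw [CtxtSubst_append]
      exact Typed.pair _ _ s t _ _ ih1 ih2
  | letp Γ Δ s t x y A B C h1 h2 ih1 ih2 =>
      rw [CtxtSubst_append]
      exact Typed.letp _ _ s t x y _ _ _ ih1 ih2

/-! ### Inversion lemmas -/

theorem inv_var : ∀ {Γ : Ctxt} {u : Tm} {C : Ty}, Typed Γ u C → ∀ x, u = .var x →
    Γ.Perm [(x, C)] := by
  intro Γ u C h
  induction h with
  | var y A => intro x hx; cases hx; exact List.Perm.refl _
  | exch Γ Δ a b A B t C h ih =>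
      intro x hx
      exact (exch_perm Γ Δ (b, B) (a, A)).trans (ih x hx)
  | lam _ _ _ _ _ _ _ => intro x hx; simp at hx
  | app _ _ _ _ _ _ _ _ _ _ => intro x hx; simp at hx
  | pair _ _ _ _ _ _ _ _ _ _ => intro x hx; simp at hx
  | letp _ _ _ _ _ _ _ _ _ _ _ _ _ => intro x hx; simp at hx

theorem inv_app : ∀ {Γ : Ctxt} {u : Tm} {C : Ty}, Typed Γ u C → ∀ t s, u = .app t s →
    ∃ (Γ₁ Γ₂ : Ctxt) (A : Ty), Γ.Perm (Γ₁ ++ Γ₂) ∧ Typed Γ₁ t (.arrow A C) ∧ Typed Γ₂ s A := by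
  intro Γ u C h
  induction h with
  | var y A => intro t s hx; simp at hx
  | exch Γ Δ a b A B t C h ih =>
      intro t s hx
      obtain ⟨Γ₁, Γ₂, A', hp, h1, h2⟩ := ih t s hx
      exact ⟨Γ₁, Γ₂, A', (exch_perm Γ Δ (b, B) (a, A)).trans hp, h1, h2⟩
  | lam _ _ _ _ _ _ _ => intro t s hx; simp at hx
  | app Γ Δ t' s' A B h1 h2 _ _ =>
      intro t s hx
      obtain ⟨rfl, rfl⟩ : t' = t ∧ s' = s := by
        injection hx with e1 e2; exact ⟨e1, e2⟩
      exact ⟨Γ, Δ, A, List.Perm.refl _, h1, h2⟩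
  | pair _ _ _ _ _ _ _ _ _ _ => intro t s hx; simp at hx
  | letp _ _ _ _ _ _ _ _ _ _ _ _ _ => intro t s hx; simp at hx

theorem inv_lam : ∀ {Γ : Ctxt} {u : Tm} {C : Ty}, Typed Γ u C → ∀ x b, u = .lam x b →
    ∃ (A B : Ty), C = .arrow A B ∧ Typed ((x, A) :: Γ) b B := by
  intro Γ u C h
  induction h with
  | var y A => intro x b hx; simp at hx
  | exch Γ Δ a b' A B t C h ih =>
      intro x b hx
      obtain ⟨A', B', hC, ht⟩ := ih x b hx
      refine ⟨A', B', hC, typed_perm ht ?_⟩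
      exact exch_perm ((x, A') :: Γ) Δ (a, A) (b', B)
  | lam y A Γ t B h _ =>
      intro x b hx
      obtain ⟨rfl, rfl⟩ : y = x ∧ t = b := by
        injection hx with e1 e2; exact ⟨e1, e2⟩
      exact ⟨A, B, rfl, h⟩
  | app _ _ _ _ _ _ _ _ _ _ => intro x b hx; simp at hx
  | pair _ _ _ _ _ _ _ _ _ _ => intro x b hx; simp at hx
  | letp _ _ _ _ _ _ _ _ _ _ _ _ _ => intro x b hx; simp at hx

theorem inv_pair : ∀ {Γ : Ctxt} {u : Tm} {C : Ty}, Typed Γ u C → ∀ t s, u = .pair t s →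
    ∃ (Γ₁ Γ₂ : Ctxt) (A B : Ty), Γ.Perm (Γ₁ ++ Γ₂) ∧ C = .tensor A B ∧
      Typed Γ₁ t A ∧ Typed Γ₂ s B := by
  intro Γ u C h
  induction h with
  | var y A => intro t s hx; simp at hx
  | exch Γ Δ a b A B t C h ih =>
      intro t s hx
      obtain ⟨Γ₁, Γ₂, A', B', hp, hC, h1, h2⟩ := ih t s hx
      exact ⟨Γ₁, Γ₂, A', B', (exch_perm Γ Δ (b, B) (a, A)).trans hp, hC, h1, h2⟩
  | lam _ _ _ _ _ _ _ => intro t s hx; simp at hx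
  | app _ _ _ _ _ _ _ _ _ _ => intro t s hx; simp at hx
  | pair Γ Δ s' t' A B h1 h2 _ _ =>
      intro t s hx
      obtain ⟨rfl, rfl⟩ : s' = t ∧ t' = s := by
        injection hx with e1 e2; exact ⟨e1, e2⟩
      exact ⟨Γ, Δ, A, B, List.Perm.refl _, rfl, h1, h2⟩
  | letp _ _ _ _ _ _ _ _ _ _ _ _ _ => intro t s hx; simp at hx

theorem inv_letp : ∀ {Γ : Ctxt} {u : Tm} {C : Ty}, Typed Γ u C →
    ∀ x y s w, u = .letp x y s w →
    ∃ (Γ₁ Γ₂ : Ctxt) (A B : Ty), Γ.Perm (Γ₁ ++ Γ₂) ∧ Typed Γ₁ s (.tensor A B) ∧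
      Typed ((x, A) :: (y, B) :: Γ₂) w C := by
  intro Γ u C h
  induction h with
  | var y A => intro x y s w hx; simp at hx
  | exch Γ Δ a b A B t C h ih =>
      intro x y s w hx
      obtain ⟨Γ₁, Γ₂, A', B', hp, h1, h2⟩ := ih x y s w hx
      exact ⟨Γ₁, Γ₂, A', B', (exch_perm Γ Δ (b, B) (a, A)).trans hp, h1, h2⟩
  | lam _ _ _ _ _ _ _ => intro x y s w hx; simp at hx
  | app _ _ _ _ _ _ _ _ _ _ => intro x y s w hx; simp at hx
  | pair _ _ _ _ _ _ _ _ _ _ => intro x y s w hx; simp at hx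
  | letp Γ Δ s' w' x' y' A B C h1 h2 _ _ =>
      intro x y s w hx
      obtain ⟨rfl, rfl, rfl, rfl⟩ : x' = x ∧ y' = y ∧ s' = s ∧ w' = w := by
        injection hx with e1 e2 e3 e4; exact ⟨e1, e2, e3, e4⟩
      exact ⟨Γ, Δ, A, B, List.Perm.refl _, h1, h2⟩

/-! ### Counting -/

theorem typed_count {Γ : Ctxt} {u : Tm} {C : Ty} (h : Typed Γ u C) :
    ∀ x, u.binds x = 0 → (Γ.map Prod.fst).count x = u.uses x := by
  induction h with
  | var y A =>
      intro x _
      simp only [Tm.uses, List.map_cons, List.map_nil]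
      by_cases hyx : y = x
      · subst hyx; simp
      · simp [List.count_cons, hyx, Ne.symm hyx]
  | exch Γ Δ a b A B t C h ih =>
      intro x hb
      have hp := (exch_perm Γ Δ (b, B) (a, A)).map Prod.fst
      rw [hp.count_eq]
      exact ih x hb
  | lam y A Γ t B h ih =>
      intro x hb
      simp only [Tm.binds] at hb
      have hyx : y ≠ x := by intro e; simp [e] at hb
      rw [if_neg hyx] at hb
      have hbt : t.binds x = 0 := by omega
      have h1 := ih x hbt
      simp only [List.map_cons, List.count_cons] at h1
      simp only [Tm.uses]
      simp [hyx, Ne.symm hyx] at h1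
      exact h1
  | app Γ Δ t s A B h1 h2 ih1 ih2 =>
      intro x hb
      simp only [Tm.binds] at hb
      simp only [Tm.uses, List.map_append, List.count_append]
      rw [ih1 x (by omega), ih2 x (by omega)]
  | pair Γ Δ s t A B h1 h2 ih1 ih2 =>
      intro x hb
      simp only [Tm.binds] at hb
      simp only [Tm.uses, List.map_append, List.count_append]
      rw [ih1 x (by omega), ih2 x (by omega)]
  | letp Γ Δ s t y z A B C h1 h2 ih1 ih2 =>
      intro x hb
      simp only [Tm.binds] at hb
      have hyx : y ≠ x := by intro e; simp [e] at hb
      have hzx : z ≠ x := by intro e; simp [e] at hb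
      rw [if_neg hyx, if_neg hzx] at hb
      have hbs : s.binds x = 0 := by omega
      have hbt : t.binds x = 0 := by omega
      have h2' := ih2 x hbt
      simp only [List.map_cons, List.count_cons] at h2'
      simp only [Tm.uses, List.map_append, List.count_append]
      rw [ih1 x hbs]
      simp [hyx, hzx, Ne.symm hyx, Ne.symm hzx] at h2'
      omega

theorem key_unique {L : Ctxt} {x : ℕ} {B B' : Ty} (hc : (L.map Prod.fst).count x = 1)
    (h1 : (x, B) ∈ L) (h2 : (x, B') ∈ L) : B = B' := by
  induction L with
  | nil => cases h1
  | cons p L ih =>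
      by_cases hp : p.1 = x
      · have ht : (L.map Prod.fst).count x = 0 := by
          rw [List.map_cons, hp, List.count_cons_self] at hc
          omega
        have hnot : ∀ B'' : Ty, (x, B'') ∉ L := by
          intro B'' hB
          have hx : 0 < (L.map Prod.fst).count x :=
            List.count_pos_iff.2 (List.mem_map.2 ⟨(x, B''), hB, rfl⟩)
          omega
        rcases List.mem_cons.1 h1 with h1' | h1'
        · rcases List.mem_cons.1 h2 with h2' | h2'
          · exact congrArg Prod.snd (h1'.trans h2'.symm)
          · exact absurd h2' (hnot B')
        · exact absurd h1' (hnot B)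
      · have hc' : (L.map Prod.fst).count x = 1 := by
          rw [List.map_cons, List.count_cons] at hc
          simpa [hp, Ne.symm hp] using hc
        have h1' : (x, B) ∈ L := by
          rcases List.mem_cons.1 h1 with h | h
          · exact absurd (congrArg Prod.fst h).symm hp
          · exact h
        have h2' : (x, B') ∈ L := by
          rcases List.mem_cons.1 h2 with h | h
          · exact absurd (congrArg Prod.fst h).symm hp
          · exact h
        exact ih hc' h1' h2'

end PTP
namespace PTP

/-! ### Renaming apart and combination of substitutions -/

def ren1 : ℕ → Ty := fun v => .tvar (2 * v + 2)
def ren2 : ℕ → Ty := fun v => .tvar (2 * v + 3)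

def comb (σ1 σ2 : ℕ → Ty) (R : Ty) : ℕ → Ty := fun v =>
  if v = 0 then R else if v % 2 = 0 then σ1 ((v - 2) / 2) else σ2 ((v - 3) / 2)

theorem comb_even (σ1 σ2 : ℕ → Ty) (R : Ty) (w : ℕ) : comb σ1 σ2 R (2 * w + 2) = σ1 w := by
  simp only [comb]
  rw [if_neg (by omega), if_pos (by omega)]
  congr 1
  omega

theorem comb_odd (σ1 σ2 : ℕ → Ty) (R : Ty) (w : ℕ) : comb σ1 σ2 R (2 * w + 3) = σ2 w := by
  simp only [comb]
  rw [if_neg (by omega), if_neg (by omega)]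
  congr 1
  omega

theorem comb_zero (σ1 σ2 : ℕ → Ty) (R : Ty) : comb σ1 σ2 R 0 = R := by simp [comb]

theorem ren1_comb (σ1 σ2 : ℕ → Ty) (R : Ty) (A : Ty) :
    (A.subst ren1).subst (comb σ1 σ2 R) = A.subst σ1 := by
  rw [subst_comp]
  exact subst_congr fun v _ => comb_even σ1 σ2 R v

theorem ren2_comb (σ1 σ2 : ℕ → Ty) (R : Ty) (A : Ty) :
    (A.subst ren2).subst (comb σ1 σ2 R) = A.subst σ2 := by
  rw [subst_comp]
  exact subst_congr fun v _ => comb_odd σ1 σ2 R v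

theorem ctxt_ren1_comb (σ1 σ2 : ℕ → Ty) (R : Ty) (Γ : Ctxt) :
    CtxtSubst (CtxtSubst Γ ren1) (comb σ1 σ2 R) = CtxtSubst Γ σ1 := by
  rw [CtxtSubst_comp]
  have : (fun v => (ren1 v).subst (comb σ1 σ2 R)) = σ1 :=
    funext fun v => comb_even σ1 σ2 R v
  rw [this]

theorem ctxt_ren2_comb (σ1 σ2 : ℕ → Ty) (R : Ty) (Γ : Ctxt) :
    CtxtSubst (CtxtSubst Γ ren2) (comb σ1 σ2 R) = CtxtSubst Γ σ2 := by
  rw [CtxtSubst_comp]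
  have : (fun v => (ren2 v).subst (comb σ1 σ2 R)) = σ2 :=
    funext fun v => comb_odd σ1 σ2 R v
  rw [this]

theorem subst_factor {μ ρ σ : ℕ → Ty} (h : ∀ v, σ v = (μ v).subst ρ) (A : Ty) :
    A.subst σ = (A.subst μ).subst ρ := by
  rw [subst_comp]
  exact subst_congr fun v _ => h v

theorem ctxt_factor {μ ρ σ : ℕ → Ty} (h : ∀ v, σ v = (μ v).subst ρ) (Γ : Ctxt) :
    CtxtSubst Γ σ = CtxtSubst (CtxtSubst Γ μ) ρ := by
  rw [CtxtSubst_comp]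
  have : σ = (fun v => (μ v).subst ρ) := funext h
  rw [← this]

/-! ### The main induction -/

theorem principal_aux : ∀ t : Tm, (∀ x, t.uses x ≤ 1) → (∀ x, t.binds x ≤ 1) →
    (∃ (Γ : Ctxt) (A : Ty), Typed Γ t A) →
    ∃ (Γ0 : Ctxt) (A0 : Ty), Typed Γ0 t A0 ∧
      ∀ (Γ' : Ctxt) (A' : Ty), Typed Γ' t A' →
        ∃ θ : ℕ → Ty, A' = A0.subst θ ∧ Γ'.Perm (CtxtSubst Γ0 θ) := by
  intro t
  induction t with
  | var x =>
      intro _ _ _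
      refine ⟨[(x, .tvar 0)], .tvar 0, Typed.var x (.tvar 0), ?_⟩
      intro Γ' A' h'
      refine ⟨fun _ => A', rfl, ?_⟩
      simpa [CtxtSubst, Ty.subst] using inv_var h' x rfl
  | app t1 t2 ih1 ih2 =>
      intro hu hb hex
      have hu1 : ∀ z, t1.uses z ≤ 1 := fun z => by
        have := hu z; simp only [Tm.uses] at this; omega
      have hu2 : ∀ z, t2.uses z ≤ 1 := fun z => by
        have := hu z; simp only [Tm.uses] at this; omega
      have hb1 : ∀ z, t1.binds z ≤ 1 := fun z => by
        have := hb z; simp only [Tm.binds] at this; omega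
      have hb2 : ∀ z, t2.binds z ≤ 1 := fun z => by
        have := hb z; simp only [Tm.binds] at this; omega
      obtain ⟨Γi, Ai, hti⟩ := hex
      obtain ⟨Γa, Γb, D, _, h1, h2⟩ := inv_app hti t1 t2 rfl
      obtain ⟨Γ1, A1, hT1, hP1⟩ := ih1 hu1 hb1 ⟨Γa, _, h1⟩
      obtain ⟨Γ2, A2, hT2, hP2⟩ := ih2 hu2 hb2 ⟨Γb, _, h2⟩
      -- for any typing of the application, produce a unifier of the (renamed) constraint
      have analyze : ∀ Γ' A', Typed Γ' (.app t1 t2) A' →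
          ∃ σ1 σ2 : ℕ → Ty, A1.subst σ1 = .arrow (A2.subst σ2) A' ∧
            Γ'.Perm (CtxtSubst Γ1 σ1 ++ CtxtSubst Γ2 σ2) := by
        intro Γ' A' h'
        obtain ⟨Γa', Γb', D', hperm', h1', h2'⟩ := inv_app h' t1 t2 rfl
        obtain ⟨σ1, hA1, hp1⟩ := hP1 Γa' _ h1'
        obtain ⟨σ2, hA2, hp2⟩ := hP2 Γb' _ h2'
        exact ⟨σ1, σ2, by rw [← hA1, ← hA2], hperm'.trans (hp1.append hp2)⟩
      have mkunif : ∀ (σ1 σ2 : ℕ → Ty) (A' : Ty),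
          A1.subst σ1 = .arrow (A2.subst σ2) A' →
          (A1.subst ren1).subst (comb σ1 σ2 A') =
            (Ty.arrow (A2.subst ren2) (.tvar 0)).subst (comb σ1 σ2 A') := by
        intro σ1 σ2 A' hA
        simp only [Ty.subst]
        rw [ren1_comb, ren2_comb, comb_zero, hA]
      obtain ⟨σ1i, σ2i, hAi', _⟩ := analyze Γi Ai hti
      obtain ⟨μ, hμ, hμM⟩ := mgu_exists (A1.subst ren1) (.arrow (A2.subst ren2) (.tvar 0))
        ⟨comb σ1i σ2i Ai, mkunif σ1i σ2i Ai hAi'⟩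
      refine ⟨CtxtSubst (CtxtSubst Γ1 ren1 ++ CtxtSubst Γ2 ren2) μ, μ 0, ?_, ?_⟩
      · rw [CtxtSubst_append]
        refine Typed.app _ _ t1 t2 ((A2.subst ren2).subst μ) (μ 0) ?_ ?_
        · have h := typed_subst (typed_subst hT1 ren1) μ
          rw [hμ] at h
          simpa only [Ty.subst] using h
        · exact typed_subst (typed_subst hT2 ren2) μ
      · intro Γ' A' h'
        obtain ⟨σ1, σ2, hA, hp⟩ := analyze Γ' A' h'
        obtain ⟨ρ, hρ⟩ := hμM (comb σ1 σ2 A') (mkunif σ1 σ2 A' hA)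
        refine ⟨ρ, ?_, ?_⟩
        · have := hρ 0
          rw [comb_zero] at this
          exact this
        · have e : CtxtSubst (CtxtSubst (CtxtSubst Γ1 ren1 ++ CtxtSubst Γ2 ren2) μ) ρ =
              CtxtSubst Γ1 σ1 ++ CtxtSubst Γ2 σ2 := by
            rw [← ctxt_factor hρ, CtxtSubst_append, ctxt_ren1_comb, ctxt_ren2_comb]
          rw [e]
          exact hp
  | lam x u ih =>
      intro hu hb hex
      have hu' : ∀ z, u.uses z ≤ 1 := fun z => by
        have := hu z; simpa only [Tm.uses] using this
      have hb' : ∀ z, u.binds z ≤ 1 := fun z => by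
        have := hb z; simp only [Tm.binds] at this; omega
      obtain ⟨Γi, Ai, hti⟩ := hex
      obtain ⟨D, E, hAi, hui⟩ := inv_lam hti x u rfl
      obtain ⟨Γu, Au, hTu, hPu⟩ := ih hu' hb' ⟨_, _, hui⟩
      have hbux : u.binds x = 0 := by
        have h := hb x
        simp [Tm.binds] at h
        omega
      have husx : u.uses x = 1 := by
        have hcount := typed_count hui x hbux
        have h1 : 1 ≤ (((x, D) :: Γi).map Prod.fst).count x := by
          simp [List.count_cons]
        have h2 := hu x
        simp only [Tm.uses] at h2
        omega
      have hcΓu : (Γu.map Prod.fst).count x = 1 := by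
        rw [typed_count hTu x hbux, husx]
      have hxmem : x ∈ Γu.map Prod.fst := List.count_pos_iff.1 (by omega)
      obtain ⟨p, hpmem, hpx⟩ := List.mem_map.1 hxmem
      obtain ⟨px, Ax⟩ := p
      simp only at hpx
      subst hpx
      obtain ⟨Γrest, hpermu⟩ : ∃ Γrest, Γu.Perm ((px, Ax) :: Γrest) :=
        ⟨_, List.perm_cons_erase hpmem⟩
      refine ⟨Γrest, .arrow Ax Au, ?_, ?_⟩
      · exact Typed.lam px Ax _ u Au (typed_perm hTu hpermu)
      · intro Γ' A' h'
        obtain ⟨B, C, hA', hu''⟩ := inv_lam h' px u rfl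
        obtain ⟨σ, hC, hp⟩ := hPu _ _ hu''
        have hmem1 : (px, B) ∈ CtxtSubst Γu σ := hp.subset List.mem_cons_self
        have hmem2 : (px, Ax.subst σ) ∈ CtxtSubst Γu σ := by
          simp only [CtxtSubst, List.mem_map]
          exact ⟨(px, Ax), hpmem, rfl⟩
        have hcσ : ((CtxtSubst Γu σ).map Prod.fst).count px = 1 := by
          rw [CtxtSubst_keys]; exact hcΓu
        have hBAx : B = Ax.subst σ := key_unique hcσ hmem1 hmem2
        refine ⟨σ, ?_, ?_⟩
        · rw [hA', hC, hBAx]; rfl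
        · have hp2 : ((px, B) :: Γ').Perm
              ((px, Ax.subst σ) :: CtxtSubst Γrest σ) :=
            hp.trans (by simpa [CtxtSubst_cons] using CtxtSubst_perm hpermu σ)
          rw [← hBAx] at hp2
          exact hp2.cons_inv
  | pair t1 t2 ih1 ih2 =>
      intro hu hb hex
      have hu1 : ∀ z, t1.uses z ≤ 1 := fun z => by
        have := hu z; simp only [Tm.uses] at this; omega
      have hu2 : ∀ z, t2.uses z ≤ 1 := fun z => by
        have := hu z; simp only [Tm.uses] at this; omega
      have hb1 : ∀ z, t1.binds z ≤ 1 := fun z => by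
        have := hb z; simp only [Tm.binds] at this; omega
      have hb2 : ∀ z, t2.binds z ≤ 1 := fun z => by
        have := hb z; simp only [Tm.binds] at this; omega
      obtain ⟨Γi, Ai, hti⟩ := hex
      obtain ⟨Γa, Γb, D, E, _, _, h1, h2⟩ := inv_pair hti t1 t2 rfl
      obtain ⟨Γ1, A1, hT1, hP1⟩ := ih1 hu1 hb1 ⟨Γa, _, h1⟩
      obtain ⟨Γ2, A2, hT2, hP2⟩ := ih2 hu2 hb2 ⟨Γb, _, h2⟩
      refine ⟨CtxtSubst Γ1 ren1 ++ CtxtSubst Γ2 ren2,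
        .tensor (A1.subst ren1) (A2.subst ren2),
        Typed.pair _ _ t1 t2 _ _ (typed_subst hT1 ren1) (typed_subst hT2 ren2), ?_⟩
      intro Γ' A' h'
      obtain ⟨Γa', Γb', D', E', hperm', hA', h1', h2'⟩ := inv_pair h' t1 t2 rfl
      obtain ⟨σ1, hA1, hp1⟩ := hP1 Γa' _ h1'
      obtain ⟨σ2, hA2, hp2⟩ := hP2 Γb' _ h2'
      refine ⟨comb σ1 σ2 (.tvar 0), ?_, ?_⟩
      · simp only [Ty.subst]
        rw [ren1_comb, ren2_comb, ← hA1, ← hA2, hA']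
      · rw [CtxtSubst_append, ctxt_ren1_comb, ctxt_ren2_comb]
        exact hperm'.trans (hp1.append hp2)
  | letp x y s w ihs ihw =>
      intro hu hb hex
      have hus : ∀ z, s.uses z ≤ 1 := fun z => by
        have := hu z; simp only [Tm.uses] at this; omega
      have huw : ∀ z, w.uses z ≤ 1 := fun z => by
        have := hu z; simp only [Tm.uses] at this; omega
      have hbs : ∀ z, s.binds z ≤ 1 := fun z => by
        have := hb z; simp only [Tm.binds] at this; omega
      have hbw : ∀ z, w.binds z ≤ 1 := fun z => by
        have := hb z; simp only [Tm.binds] at this; omega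
      have hxy : x ≠ y := by
        intro e
        subst e
        have h := hb x
        simp [Tm.binds] at h
        omega
      have hyx : ¬ (y = x) := fun e => hxy e.symm
      have hbwx : w.binds x = 0 := by
        have h := hb x
        simp [Tm.binds, hyx] at h
        omega
      have hbwy : w.binds y = 0 := by
        have h := hb y
        simp [Tm.binds, hxy] at h
        omega
      obtain ⟨Γi, Ai, hti⟩ := hex
      obtain ⟨Γa, Γb, D, E, hperm, hsi, hwi⟩ := inv_letp hti x y s w rfl
      obtain ⟨Γs, As, hTs, hPs⟩ := ihs hus hbs ⟨_, _, hsi⟩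
      obtain ⟨Γw, Aw, hTw, hPw⟩ := ihw huw hbw ⟨_, _, hwi⟩
      have huwx : w.uses x = 1 := by
        have hcount := typed_count hwi x hbwx
        have h1 : 0 < (((x, D) :: (y, E) :: Γb).map Prod.fst).count x :=
          List.count_pos_iff.2 (by simp)
        have h2 := hu x
        simp only [Tm.uses] at h2
        omega
      have huwy : w.uses y = 1 := by
        have hcount := typed_count hwi y hbwy
        have h1 : 0 < (((x, D) :: (y, E) :: Γb).map Prod.fst).count y :=
          List.count_pos_iff.2 (by simp)
        have h2 := hu y
        simp only [Tm.uses] at h2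
        omega
      have hcwx : (Γw.map Prod.fst).count x = 1 := by
        rw [typed_count hTw x hbwx, huwx]
      have hcwy : (Γw.map Prod.fst).count y = 1 := by
        rw [typed_count hTw y hbwy, huwy]
      -- extract the x entry of Γw
      have hxmem : x ∈ Γw.map Prod.fst := List.count_pos_iff.1 (by omega)
      obtain ⟨p, hpmem, hpx⟩ := List.mem_map.1 hxmem
      obtain ⟨px, Ax⟩ := p
      simp only at hpx
      subst hpx
      obtain ⟨Γw1, hpw1⟩ : ∃ Γw1, Γw.Perm ((px, Ax) :: Γw1) :=
        ⟨_, List.perm_cons_erase hpmem⟩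
      have hcw1y : (Γw1.map Prod.fst).count y = 1 := by
        have h := (hpw1.map Prod.fst).count_eq y
        rw [hcwy] at h
        simp only [List.map_cons] at h
        rw [List.count_cons_of_ne hxy] at h
        exact h.symm
      have hymem : y ∈ Γw1.map Prod.fst :=
        List.count_pos_iff.1 (by rw [hcw1y]; omega)
      obtain ⟨q, hqmem, hqy⟩ := List.mem_map.1 hymem
      obtain ⟨qy, Ay⟩ := q
      simp only at hqy
      subst hqy
      obtain ⟨Γw2, hpw2⟩ : ∃ Γw2, Γw1.Perm ((qy, Ay) :: Γw2) :=
        ⟨_, List.perm_cons_erase hqmem⟩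
      have hpw : Γw.Perm ((px, Ax) :: (qy, Ay) :: Γw2) :=
        hpw1.trans (hpw2.cons (px, Ax))
      -- analysis of an arbitrary typing
      have analyze : ∀ Γ' A', Typed Γ' (.letp px qy s w) A' →
          ∃ σ1 σ2 : ℕ → Ty, As.subst σ1 = .tensor (Ax.subst σ2) (Ay.subst σ2) ∧
            A' = Aw.subst σ2 ∧ Γ'.Perm (CtxtSubst Γs σ1 ++ CtxtSubst Γw2 σ2) := by
        intro Γ' A' h'
        obtain ⟨Γa', Γb', D', E', hperm', hsi', hwi'⟩ := inv_letp h' px qy s w rfl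
        obtain ⟨σ1, hAs1, hpa⟩ := hPs Γa' _ hsi'
        obtain ⟨σ2, hAw2, hpb⟩ := hPw _ _ hwi'
        have hpc : (CtxtSubst Γw σ2).Perm
            ((px, Ax.subst σ2) :: (qy, Ay.subst σ2) :: CtxtSubst Γw2 σ2) := by
          simpa [CtxtSubst_cons] using CtxtSubst_perm hpw σ2
        have hcx : ((CtxtSubst Γw σ2).map Prod.fst).count px = 1 := by
          rw [CtxtSubst_keys]; exact hcwx
        have hcy : ((CtxtSubst Γw σ2).map Prod.fst).count qy = 1 := by
          rw [CtxtSubst_keys]; exact hcwy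
        have hD : D' = Ax.subst σ2 :=
          key_unique hcx (hpb.subset (by simp)) (hpc.symm.subset (by simp))
        have hE : E' = Ay.subst σ2 :=
          key_unique hcy (hpb.subset (by simp)) (hpc.symm.subset (by simp))
        have hΓb : Γb'.Perm (CtxtSubst Γw2 σ2) := by
          have h := hpb.trans hpc
          rw [← hD, ← hE] at h
          exact h.cons_inv.cons_inv
        refine ⟨σ1, σ2, by rw [← hAs1, hD, hE], hAw2, hperm'.trans (hpa.append hΓb)⟩
      have mkunif : ∀ (σ1 σ2 : ℕ → Ty),
          As.subst σ1 = .tensor (Ax.subst σ2) (Ay.subst σ2) →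
          (As.subst ren1).subst (comb σ1 σ2 (.tvar 0)) =
            (Ty.tensor (Ax.subst ren2) (Ay.subst ren2)).subst (comb σ1 σ2 (.tvar 0)) := by
        intro σ1 σ2 hA
        simp only [Ty.subst]
        rw [ren1_comb, ren2_comb, ren2_comb, hA]
      obtain ⟨σ1i, σ2i, hAsi, _, _⟩ := analyze Γi Ai hti
      obtain ⟨μ, hμ, hμM⟩ := mgu_exists (As.subst ren1)
        (.tensor (Ax.subst ren2) (Ay.subst ren2))
        ⟨comb σ1i σ2i (.tvar 0), mkunif σ1i σ2i hAsi⟩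
      refine ⟨CtxtSubst (CtxtSubst Γs ren1 ++ CtxtSubst Γw2 ren2) μ,
        (Aw.subst ren2).subst μ, ?_, ?_⟩
      · rw [CtxtSubst_append]
        refine Typed.letp _ _ s w px qy ((Ax.subst ren2).subst μ) ((Ay.subst ren2).subst μ)
          ((Aw.subst ren2).subst μ) ?_ ?_
        · have h := typed_subst (typed_subst hTs ren1) μ
          rw [hμ] at h
          simpa only [Ty.subst] using h
        · have h := typed_subst (typed_subst (typed_perm hTw hpw) ren2) μ
          simpa only [CtxtSubst_cons] using h
      · intro Γ' A' h'
        obtain ⟨σ1, σ2, hAseq, hA'eq, hp⟩ := analyze Γ' A' h'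
        obtain ⟨ρ, hρ⟩ := hμM (comb σ1 σ2 (.tvar 0)) (mkunif σ1 σ2 hAseq)
        refine ⟨ρ, ?_, ?_⟩
        · rw [← subst_factor hρ, ren2_comb]
          exact hA'eq
        · have e : CtxtSubst (CtxtSubst (CtxtSubst Γs ren1 ++ CtxtSubst Γw2 ren2) μ) ρ =
              CtxtSubst Γs σ1 ++ CtxtSubst Γw2 σ2 := by
            rw [← ctxt_factor hρ, CtxtSubst_append, ctxt_ren1_comb, ctxt_ren2_comb]
          rw [e]
          exact hp

end PTP

/-- **Principal Type Proposition.** Every typable untyped linear λ-term has a principal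
typing `Γ0 ⊢ t : A0`: every derivable typing of `t` is an instance of it (up to the
exchange of context entries that is built into the system). -/
theorem principal_typing (t : Tm) (hlin : t.LinearTm)
    (htypable : ∃ (Γ : Ctxt) (A : Ty), Typed Γ t A) :
    ∃ (Γ0 : Ctxt) (A0 : Ty), Typed Γ0 t A0 ∧
      ∀ (Γ' : Ctxt) (A' : Ty), Typed Γ' t A' →
        ∃ θ : ℕ → Ty, A' = A0.subst θ ∧ Γ'.Perm (CtxtSubst Γ0 θ) := by
  exact PTP.principal_aux t hlin.1 hlin.2.1 htypable
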